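/- Let φ be a K-algebra automorphism of K[x,y,z] with φ(x) = f, φ(y) = λ₁y, φ(z) = λ₂z for some nonzero λ₁, λ₂ ∈ K. Then f = λx + f₀(y,z), where λ ∈ K is nonzero and f₀ is a polynomial in y and z only. -/

import Mathlib

open MvPolynomial

/-- Units of a multivariate polynomial ring (finitely many vars) over a field are constants. -/
lemma mv_isUnit_eq_C {K : Type*} [Field K] : ∀ (n : ℕ) (p : MvPolynomial (Fin n) K),
    IsUnit p → ∃ k : K, p = C k := by
  intro n
  induction n with
  | zero =>
    intro p _
    exact ⟨p.coeff 0, (eq_C_of_isEmpty p)⟩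
  | succ n ih =>
    intro p hp
    set e := MvPolynomial.finSuccEquiv K n with he
    have hup : IsUnit (e p) := hp.map e
    obtain ⟨r, hr, hrp⟩ := Polynomial.isUnit_iff.mp hup
    obtain ⟨k, hk⟩ := ih r hr
    refine ⟨k, e.injective ?_⟩
    rw [← hrp, hk]
    have : (C k : MvPolynomial (Fin (n+1)) K) = algebraMap K _ k := rfl
    rw [this, AlgEquiv.commutes]
    rfl

theorem automorphism_fixing_y_z_up_to_scalar
    {K : Type*} [Field K] [IsAlgClosed K] [CharZero K]
    (φ : MvPolynomial (Fin 3) K ≃ₐ[K] MvPolynomial (Fin 3) K)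
    (l₁ l₂ : K) (hl₁ : l₁ ≠ 0) (hl₂ : l₂ ≠ 0)
    (hy : φ (X 1) = C l₁ * X 1) (hz : φ (X 2) = C l₂ * X 2) :
    ∃ (l : K) (f₀ : MvPolynomial (Fin 3) K), l ≠ 0 ∧ (0 : Fin 3) ∉ f₀.vars ∧
      φ (X 0) = C l * X 0 + f₀ := by
  classical
  set R := MvPolynomial (Fin 2) K with hR
  set e : MvPolynomial (Fin 3) K ≃ₐ[K] Polynomial R := MvPolynomial.finSuccEquiv K 2 with he
  set Φ : Polynomial R ≃ₐ[K] Polynomial R := (e.symm.trans φ).trans e with hΦ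
  have hΦ_apply : ∀ p, Φ p = e (φ (e.symm p)) := fun p => rfl
  -- the variable-scaling map on R
  set σ : R →ₐ[K] R := MvPolynomial.aeval ![C l₁ * X 0, C l₂ * X 1] with hσ
  -- e.symm of constants
  have hesymmC : ∀ i : Fin 2, e.symm (Polynomial.C (X i)) = X i.succ := by
    intro i
    apply e.injective
    rw [AlgEquiv.apply_symm_apply, finSuccEquiv_X_succ]
  have hsucc0 : (Fin.succ 0 : Fin 3) = 1 := rfl
  have hsucc1 : (Fin.succ 1 : Fin 3) = 2 := rfl
  -- key : Φ on constants is given by σ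
  have key : ∀ r : R, Φ (Polynomial.C r) = Polynomial.C (σ r) := by
    have : (Φ.toAlgHom.comp (Polynomial.CAlgHom) : R →ₐ[K] Polynomial R)
        = (Polynomial.CAlgHom).comp σ := by
      apply MvPolynomial.algHom_ext
      intro i
      fin_cases i
      · simp only [AlgHom.comp_apply, Polynomial.CAlgHom_apply, AlgEquiv.toAlgHom_eq_coe,
          AlgHom.coe_coe]
        erw [hΦ_apply]
        rw [show ((⟨0, by norm_num⟩ : Fin 2) : Fin 2) = 0 from rfl]
        rw [hesymmC 0, hsucc0, hy]
        rw [map_mul]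
        have h1 : e (X (1 : Fin 3)) = Polynomial.C (X 0) := by
          rw [← hsucc0, finSuccEquiv_X_succ]
        have h2 : e (C l₁ : MvPolynomial (Fin 3) K) = Polynomial.C (C l₁) := by
          have : (C l₁ : MvPolynomial (Fin 3) K) = algebraMap K _ l₁ := rfl
          rw [this, AlgEquiv.commutes]; rfl
        rw [h1, h2, ← map_mul]
        simp [hσ]
      · simp only [AlgHom.comp_apply, Polynomial.CAlgHom_apply, AlgEquiv.toAlgHom_eq_coe,
          AlgHom.coe_coe]
        erw [hΦ_apply]
        rw [show ((⟨1, by norm_num⟩ : Fin 2) : Fin 2) = 1 from rfl]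
        rw [hesymmC 1, hsucc1, hz]
        rw [map_mul]
        have h1 : e (X (2 : Fin 3)) = Polynomial.C (X 1) := by
          rw [← hsucc1, finSuccEquiv_X_succ]
        have h2 : e (C l₂ : MvPolynomial (Fin 3) K) = Polynomial.C (C l₂) := by
          have : (C l₂ : MvPolynomial (Fin 3) K) = algebraMap K _ l₂ := rfl
          rw [this, AlgEquiv.commutes]; rfl
        rw [h1, h2, ← map_mul]
        simp [hσ]
    intro r
    have := congrArg (fun ψ => ψ r) this
    simpa using this
  -- f and g
  set f : Polynomial R := Φ Polynomial.X with hf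
  set g : Polynomial R := Φ.symm Polynomial.X with hg
  -- Φ as eval₂
  have hΦr : (Φ : Polynomial R →+* Polynomial R)
      = Polynomial.eval₂RingHom ((Polynomial.C : R →+* Polynomial R).comp σ.toRingHom) f := by
    apply Polynomial.ringHom_ext
    · intro r
      simpa using key r
    · simp [hf]
  have hcomp : ((g.map (σ : R →+* R)).comp f) = Polynomial.X := by
    have h1 : Φ g = Polynomial.X := Φ.apply_symm_apply _
    have h2 : Φ g = Polynomial.eval₂ ((Polynomial.C : R →+* Polynomial R).comp (σ : R →+* R)) f g := by
      have := congrArg (fun ψ => ψ g) hΦr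
      simpa using this
    rw [Polynomial.comp, Polynomial.eval₂_map]
    rw [← h2, h1]
  -- degrees
  have hdeg : (g.map (σ : R →+* R)).natDegree * f.natDegree = 1 := by
    rw [← Polynomial.natDegree_comp, hcomp, Polynomial.natDegree_X]
  set G : Polynomial R := g.map (σ : R →+* R) with hG
  have hGdeg : G.natDegree = 1 := Nat.eq_one_of_mul_eq_one_right hdeg
  have hfdeg : f.natDegree = 1 := Nat.eq_one_of_mul_eq_one_left hdeg
  have hfform : f = Polynomial.C (f.coeff 1) * Polynomial.X + Polynomial.C (f.coeff 0) :=
    Polynomial.eq_X_add_C_of_degree_le_one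
      (by exact_mod_cast Polynomial.natDegree_le_iff_degree_le.mp hfdeg.le)
  have hGform : G = Polynomial.C (G.coeff 1) * Polynomial.X + Polynomial.C (G.coeff 0) :=
    Polynomial.eq_X_add_C_of_degree_le_one
      (by exact_mod_cast Polynomial.natDegree_le_iff_degree_le.mp hGdeg.le)
  -- coefficient computation : (G.comp f).coeff 1 = G.coeff 1 * f.coeff 1
  have hmul : G.coeff 1 * f.coeff 1 = 1 := by
    have := congrArg (fun p => Polynomial.coeff p 1) hcomp
    simp only [Polynomial.coeff_X_one] at this
    rw [← this]
    conv_rhs => rw [hGform]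
    simp [Polynomial.add_comp, Polynomial.mul_comp, Polynomial.C_comp, Polynomial.X_comp,
      Polynomial.coeff_C, Polynomial.coeff_C_mul]
  have hunit : IsUnit (f.coeff 1) := IsUnit.of_mul_eq_one _ (by rw [mul_comm] at hmul; exact hmul)
  obtain ⟨l, hl⟩ := mv_isUnit_eq_C 2 (f.coeff 1) hunit
  have hlne : l ≠ 0 := by
    intro h0
    rw [h0, map_zero] at hl
    have : f.coeff 1 ≠ 0 := by
      have hfne : f ≠ 0 := by
        intro h; rw [h] at hfdeg; simp at hfdeg
      have := Polynomial.leadingCoeff_ne_zero.mpr hfne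
      rwa [Polynomial.leadingCoeff, hfdeg] at this
    exact this hl
  -- e.symm computations
  have hesymmX : e.symm Polynomial.X = X 0 := by
    apply e.injective
    rw [AlgEquiv.apply_symm_apply, finSuccEquiv_X_zero]
  have hesymmCb : ∀ b : R, e.symm (Polynomial.C b) = rename Fin.succ b := by
    have : (e.symm.toAlgHom.comp (Polynomial.CAlgHom) : R →ₐ[K] MvPolynomial (Fin 3) K)
        = (rename Fin.succ : R →ₐ[K] MvPolynomial (Fin 3) K) := by
      apply MvPolynomial.algHom_ext
      intro i
      simp only [AlgHom.comp_apply, Polynomial.CAlgHom_apply, AlgEquiv.toAlgHom_eq_coe,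
        AlgHom.coe_coe, rename_X]
      exact hesymmC i
    intro b
    have := congrArg (fun ψ => ψ b) this
    simpa using this
  refine ⟨l, rename Fin.succ (f.coeff 0), hlne, ?_, ?_⟩
  · intro hmem
    have := MvPolynomial.vars_rename Fin.succ (f.coeff 0) hmem
    simp only [Finset.mem_image] at this
    obtain ⟨j, -, hj⟩ := this
    exact Fin.succ_ne_zero j hj
  · have : φ (X 0) = e.symm f := by
      rw [hf, hΦ_apply, hesymmX, AlgEquiv.symm_apply_apply]
    rw [this]
    conv_lhs => rw [hfform]
    simp only [map_add, map_mul, hesymmX, hesymmCb, hl, rename_C]
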